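/- Let a > 0 be a real constant. Then for all sufficiently large n, every binary (n, M, d) code with minimum distance d ≥ n/2 − a√n satisfies M ≤ 2^{0.189 n}. -/

import Mathlib

open Finset Filter Real Topology


/-- The term `choose n k * m^k * (n-m)^(n-k)` is maximized at `k = m`. -/
lemma term_le_max (n m : ℕ) (hm : m ≤ n) (k : ℕ) :
    n.choose k * (m ^ k * (n - m) ^ (n - k)) ≤ n.choose m * (m ^ m * (n - m) ^ (n - m)) := by
  set T : ℕ → ℕ := fun k => n.choose k * (m ^ k * (n - m) ^ (n - k)) with hT
  -- key identity
  have key : ∀ j < n, T (j+1) * ((j+1) * (n - m)) = T j * ((n - j) * m) := by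
    intro j hj
    have h1 : n.choose (j+1) * (j+1) = n.choose j * (n - j) := Nat.choose_succ_right_eq n j
    have h2 : (n - m) ^ (n - (j+1)) * (n - m) = (n - m) ^ (n - j) := by
      rw [← pow_succ]
      congr 1
      omega
    calc T (j+1) * ((j+1) * (n - m))
        = (n.choose (j+1) * (j+1)) * (m ^ (j+1) * ((n - m) ^ (n - (j+1)) * (n - m))) := by ring
      _ = (n.choose j * (n - j)) * (m ^ (j+1) * (n - m) ^ (n - j)) := by rw [h1, h2]
      _ = T j * ((n - j) * m) := by rw [hT]; simp only [pow_succ]; ring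
  rcases eq_or_lt_of_le hm with heq | hmn
  · -- m = n case
    subst heq
    rcases Nat.lt_trichotomy k m with hk | rfl | hk
    · simp [T, zero_pow (show m - k ≠ 0 by omega)]
    · exact le_refl _
    · simp [T, Nat.choose_eq_zero_of_lt hk]
  · -- m < n
    have step_up : ∀ j, m ≤ j → T (j+1) ≤ T j := by
      intro j hj
      rcases Nat.lt_or_ge j n with hjn | hjn
      · have hkey := key j hjn
        have hineq : (n - j) * m ≤ (j+1) * (n - m) := by
          have h1 : (n - j) * m ≤ (n - m) * m := Nat.mul_le_mul_right m (by omega)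
          have h2 : (n - m) * m ≤ (j + 1) * (n - m) := by
            calc (n - m) * m = m * (n - m) := Nat.mul_comm _ _
              _ ≤ (j+1) * (n - m) := Nat.mul_le_mul_right _ (by omega)
          omega
        have : T (j+1) * ((j+1) * (n - m)) ≤ T j * ((j+1) * (n - m)) := by
          rw [hkey]
          exact Nat.mul_le_mul_left _ hineq
        exact Nat.le_of_mul_le_mul_right this (Nat.mul_pos (by omega) (by omega))
      · have : n.choose (j+1) = 0 := Nat.choose_eq_zero_of_lt (by omega)
        simp [T, this]
    have step_down : ∀ j, j < m → T j ≤ T (j+1) := by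
      intro j hj
      have hkey := key j (by omega)
      have hineq : (j+1) * (n - m) ≤ (n - j) * m := by
        calc (j+1) * (n - m) ≤ m * (n - m) := Nat.mul_le_mul_right _ (by omega)
          _ ≤ m * (n - j) := Nat.mul_le_mul_left _ (by omega)
          _ = (n - j) * m := Nat.mul_comm _ _
      have : T j * ((n - j) * m) ≤ T (j+1) * ((n - j) * m) := by
        rw [← hkey]
        exact Nat.mul_le_mul_left _ (by
          calc (j+1) * (n - m) ≤ (n - j) * m := hineq)
      exact Nat.le_of_mul_le_mul_right this (Nat.mul_pos (by omega) (by omega))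
    rcases Nat.lt_or_ge k m with hk | hk
    · -- k < m : induct upward from k to m
      have : ∀ i, k + i ≤ m → T k ≤ T (k + i) := by
        intro i
        induction i with
        | zero => intro _; exact le_refl _
        | succ i ih =>
          intro h
          calc T k ≤ T (k + i) := ih (by omega)
            _ ≤ T (k + i + 1) := step_down _ (by omega)
      have := this (m - k) (by omega)
      rwa [Nat.add_sub_cancel' (le_of_lt hk)] at this
    · -- m ≤ k
      have : ∀ i, T (m + i) ≤ T m := by
        intro i
        induction i with
        | zero => exact le_refl _
        | succ i ih =>
          calc T (m + i + 1) ≤ T (m + i) := step_up _ (by omega)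
            _ ≤ T m := ih
      have := this (k - m)
      rwa [Nat.add_sub_cancel' hk] at this

lemma pow_le_max_term (n m : ℕ) (hm : m ≤ n) :
    n ^ n ≤ (n + 1) * (n.choose m * (m ^ m * (n - m) ^ (n - m))) := by
  have hsum : ∑ k ∈ range (n+1), m ^ k * (n - m) ^ (n - k) * n.choose k = n ^ n := by
    have h := add_pow m (n - m) n
    simp only [Nat.cast_id] at h
    rw [← h]
    congr 1
    omega
  calc n ^ n = ∑ k ∈ range (n+1), m ^ k * (n - m) ^ (n - k) * n.choose k := hsum.symm
    _ ≤ ∑ _k ∈ range (n+1), n.choose m * (m ^ m * (n - m) ^ (n - m)) := by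
        apply Finset.sum_le_sum
        intro k _
        calc m ^ k * (n - m) ^ (n - k) * n.choose k
            = n.choose k * (m ^ k * (n - m) ^ (n - k)) := by ring
          _ ≤ _ := term_le_max n m hm k
    _ = (n + 1) * (n.choose m * (m ^ m * (n - m) ^ (n - m))) := by
        rw [Finset.sum_const, card_range]; ring


/-- indicator vector of a finset of coordinates -/
def indic {n : ℕ} (s : Finset (Fin n)) : Fin n → ZMod 2 :=
  fun i => if i ∈ s then 1 else 0

lemma packing (n d : ℕ) (C : Finset (Fin n → ZMod 2)) (m : ℕ)
    (hd : ∀ x ∈ C, ∀ y ∈ C, x ≠ y → d ≤ hammingDist x y) (hm : 2 * m < d) :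
    C.card * n.choose m ≤ 2 ^ n := by
  classical
  set ball : (Fin n → ZMod 2) → Finset (Fin n → ZMod 2) :=
    fun c => univ.filter (fun x => hammingDist x c ≤ m) with hball
  -- each ball contains at least choose n m elements
  have hlb : ∀ c, n.choose m ≤ (ball c).card := by
    intro c
    have hinj : Set.InjOn (fun s => c + indic s)
        ↑(Finset.powersetCard m (univ : Finset (Fin n))) := by
      intro s hs t ht hst
      have : ∀ i, indic s i = indic t i := by
        intro i
        have := congrFun hst i
        simpa using this
      ext i
      have h := this i
      simp only [indic] at h
      by_cases h1 : i ∈ s <;> by_cases h2 : i ∈ t <;> simp_all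
    have hmaps : ∀ s ∈ Finset.powersetCard m (univ : Finset (Fin n)),
        c + indic s ∈ ball c := by
      intro s hs
      rw [Finset.mem_powersetCard] at hs
      rw [hball, Finset.mem_filter]
      refine ⟨Finset.mem_univ _, ?_⟩
      have : hammingDist (c + indic s) c = s.card := by
        unfold hammingDist
        congr 1
        
        ext i
        simp only [Finset.mem_filter, Finset.mem_univ, true_and, Pi.add_apply, indic]
        constructor
        · intro h
          by_contra hi
          simp [hi] at h
        · intro hi
          simp [hi]
      rw [this, hs.2]
    calc n.choose m = (Finset.powersetCard m (univ : Finset (Fin n))).card := by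
          rw [Finset.card_powersetCard, Finset.card_univ, Fintype.card_fin]
      _ ≤ (ball c).card := Finset.card_le_card_of_injOn _ hmaps hinj
  -- balls are disjoint
  have hdisj : (C : Set (Fin n → ZMod 2)).PairwiseDisjoint ball := by
    intro c hc c' hc' hne
    simp only [Function.onFun]
    rw [Finset.disjoint_left]
    intro x hx hx'
    rw [hball, Finset.mem_filter] at hx hx'
    have htri : hammingDist c c' ≤ hammingDist c x + hammingDist x c' :=
      hammingDist_triangle c x c'
    have h1 : hammingDist c x ≤ m := by rw [hammingDist_comm]; exact hx.2
    have h2 : hammingDist x c' ≤ m := hx'.2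
    have := hd c hc c' hc' hne
    omega
  calc C.card * n.choose m = ∑ _c ∈ C, n.choose m := by rw [Finset.sum_const, smul_eq_mul]
    _ ≤ ∑ c ∈ C, (ball c).card := Finset.sum_le_sum (fun c _ => hlb c)
    _ = (C.biUnion ball).card := (Finset.card_biUnion hdisj).symm
    _ ≤ Fintype.card (Fin n → ZMod 2) := Finset.card_le_card (Finset.subset_univ _) |>.trans_eq
        (Finset.card_univ)
    _ = 2 ^ n := by simp [Fintype.card_fun]


noncomputable def mfun (a : ℝ) (n : ℕ) : ℕ := ⌊(((n:ℝ))/2 - a * Real.sqrt n - 1)/2⌋₊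

lemma xfun_lb (a : ℝ) (ha : 0 < a) : ∀ᶠ n : ℕ in atTop,
    (n : ℝ)/8 ≤ (((n:ℝ))/2 - a * Real.sqrt n - 1)/2 := by
  filter_upwards [eventually_ge_atTop (max 8 ⌈(8*a)^2⌉₊)] with n hn
  have hn8 : (8 : ℕ) ≤ n := le_trans (le_max_left _ _) hn
  have hna : ((8*a)^2 : ℝ) ≤ n := by
    have h : ⌈(8*a)^2⌉₊ ≤ n := le_trans (le_max_right _ _) hn
    calc ((8*a)^2 : ℝ) ≤ ⌈(8*a)^2⌉₊ := Nat.le_ceil _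
      _ ≤ n := by exact_mod_cast h
  have hsq : a * Real.sqrt n ≤ (n : ℝ)/8 := by
    have h8a : 8 * a ≤ Real.sqrt n := by
      have := Real.sqrt_le_sqrt hna
      rwa [Real.sqrt_sq (by positivity)] at this
    nlinarith [Real.sq_sqrt (show (0:ℝ) ≤ n by positivity), Real.sqrt_nonneg (n:ℝ)]
  have h8 : (8 : ℝ) ≤ n := by exact_mod_cast hn8
  linarith

lemma mfun_facts (a : ℝ) (ha : 0 < a) : ∀ᶠ n : ℕ in atTop,
    1 ≤ mfun a n ∧ 4 * mfun a n ≤ n ∧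
      (2 * (mfun a n) + 1 : ℝ) ≤ (n : ℝ)/2 - a * Real.sqrt n := by
  filter_upwards [xfun_lb a ha, eventually_ge_atTop 8] with n hx hn8
  set x : ℝ := (((n:ℝ))/2 - a * Real.sqrt n - 1)/2 with hxdef
  have hn8' : (8 : ℝ) ≤ n := by exact_mod_cast hn8
  have hx0 : (0:ℝ) ≤ x := le_trans (by linarith) hx
  have hfl : (mfun a n : ℝ) ≤ x := Nat.floor_le hx0
  refine ⟨?_, ?_, ?_⟩
  · rw [Nat.one_le_iff_ne_zero, ← Nat.pos_iff_ne_zero, mfun, Nat.floor_pos]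
    linarith
  · have hx4 : x ≤ (n : ℝ)/4 := by
      have h0 : 0 ≤ a * Real.sqrt n := by positivity
      rw [hxdef]; linarith
    have h1 : (mfun a n : ℝ) ≤ (n:ℝ)/4 := le_trans hfl hx4
    have h2 : ((4 * mfun a n : ℕ) : ℝ) ≤ (n : ℝ) := by push_cast; linarith
    exact_mod_cast h2
  · have h3 : (2 * (mfun a n) : ℝ) ≤ 2 * x := by linarith
    rw [hxdef] at h3
    linarith

lemma sqrt_div_tendsto : Tendsto (fun n : ℕ => Real.sqrt n / n) atTop (𝓝 0) := by
  have h1 : Tendsto (fun x : ℝ => x ^ (-(1/2 : ℝ))) atTop (𝓝 0) :=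
    tendsto_rpow_neg_atTop (by norm_num)
  have h2 : Tendsto (fun n : ℕ => ((n:ℝ)) ^ (-(1/2 : ℝ))) atTop (𝓝 0) :=
    h1.comp tendsto_natCast_atTop_atTop
  apply h2.congr'
  filter_upwards [eventually_ge_atTop 1] with n hn
  have hn0 : (0:ℝ) < n := by exact_mod_cast hn
  have h := Real.rpow_sub hn0 (1/2) 1
  rw [Real.rpow_one] at h
  rw [Real.sqrt_eq_rpow, ← h]
  norm_num

lemma mfun_tendsto (a : ℝ) (ha : 0 < a) :
    Tendsto (fun n : ℕ => (mfun a n : ℝ) / n) atTop (𝓝 (1/4)) := by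
  have hone : Tendsto (fun n : ℕ => 1 / (n:ℝ)) atTop (𝓝 0) :=
    tendsto_one_div_atTop_nhds_zero_nat
  have hl : Tendsto (fun n : ℕ =>
      1/4 - (a/2) * (Real.sqrt n / n) - (3/2) * (1/(n:ℝ))) atTop (𝓝 (1/4)) := by
    have h := ((tendsto_const_nhds (x := (1/4:ℝ)) (f := atTop)).sub
      (sqrt_div_tendsto.const_mul (a/2))).sub (hone.const_mul (3/2))
    simpa using h
  have hu : Tendsto (fun n : ℕ =>
      1/4 - (a/2) * (Real.sqrt n / n) - (1/2) * (1/(n:ℝ))) atTop (𝓝 (1/4)) := by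
    have h := ((tendsto_const_nhds (x := (1/4:ℝ)) (f := atTop)).sub
      (sqrt_div_tendsto.const_mul (a/2))).sub (hone.const_mul (1/2))
    simpa using h
  apply tendsto_of_tendsto_of_tendsto_of_le_of_le' hl hu
  · filter_upwards [eventually_ge_atTop 1] with n hn
    have hn0 : (0:ℝ) < n := by exact_mod_cast hn
    set x : ℝ := (((n:ℝ))/2 - a * Real.sqrt n - 1)/2 with hxdef
    have hmx : mfun a n = ⌊x⌋₊ := by rw [mfun, ← hxdef]
    have h : x - 1 ≤ ((⌊x⌋₊ : ℕ) : ℝ) := (Nat.sub_one_lt_floor x).le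
    have key : (x - 1)/n ≤ ((⌊x⌋₊ : ℕ):ℝ)/n := by gcongr
    have heq : 1/4 - (a/2) * (Real.sqrt n / n) - (3/2) * (1/(n:ℝ)) = (x - 1)/n := by
      rw [hxdef]; field_simp; ring
    rw [hmx, heq]
    exact key
  · filter_upwards [xfun_lb a ha, eventually_ge_atTop 1] with n hx hn
    have hn0 : (0:ℝ) < n := by exact_mod_cast hn
    set x : ℝ := (((n:ℝ))/2 - a * Real.sqrt n - 1)/2 with hxdef
    have hmx : mfun a n = ⌊x⌋₊ := by rw [mfun, ← hxdef]
    have hx0 : (0:ℝ) ≤ x := le_trans (by positivity) hx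
    have h : ((⌊x⌋₊ : ℕ) : ℝ) ≤ x := Nat.floor_le hx0
    have key : ((⌊x⌋₊ : ℕ):ℝ)/n ≤ x/n := by gcongr
    have heq : x/n = 1/4 - (a/2) * (Real.sqrt n / n) - (1/2) * (1/(n:ℝ)) := by
      rw [hxdef]; field_simp; ring
    rw [hmx, ← heq]
    exact key

lemma numeric_lt : (0:ℝ) + Real.log 2 + ((1/4) * Real.log (1/4) + (1 - 1/4) * Real.log (1 - 1/4))
    < (0.189:ℝ) * Real.log 2 := by
  have h3 : (3:ℝ)^(750:ℕ) < 2^(1189:ℕ) := by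
    have h : (3:ℕ)^750 < 2^1189 := by set_option maxRecDepth 100000 in decide
    exact_mod_cast h
  have hlt := Real.log_lt_log (by positivity) h3
  rw [Real.log_pow, Real.log_pow] at hlt
  have l4 : Real.log (1/4 : ℝ) = -(2 * Real.log 2) := by
    rw [one_div, Real.log_inv, show (4:ℝ) = 2^(2:ℕ) by norm_num, Real.log_pow]
    push_cast; ring
  have l34 : Real.log (1 - 1/4 : ℝ) = Real.log 3 - 2 * Real.log 2 := by
    rw [show (1 - 1/4 : ℝ) = 3/4 by norm_num, Real.log_div (by norm_num) (by norm_num),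
      show (4:ℝ) = 2^(2:ℕ) by norm_num, Real.log_pow]
    push_cast; ring
  rw [l4, l34]
  push_cast at hlt
  norm_num
  linarith

lemma log_succ_div_tendsto : Tendsto (fun n : ℕ => Real.log (n+1) / n) atTop (𝓝 0) := by
  have h0 : Tendsto (fun x : ℝ => Real.log x / x) atTop (𝓝 0) :=
    Real.isLittleO_log_id_atTop.tendsto_div_nhds_zero
  have h1 : Tendsto (fun n : ℕ => ((n:ℝ) + 1)) atTop atTop :=
    tendsto_atTop_add_const_right _ 1 tendsto_natCast_atTop_atTop
  have h2 : Tendsto (fun n : ℕ => Real.log ((n:ℝ)+1) / ((n:ℝ)+1)) atTop (𝓝 0) := h0.comp h1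
  have h4 : Tendsto (fun n : ℕ => ((n:ℝ)+1)/n) atTop (𝓝 1) := by
    have h := (tendsto_const_nhds (x := (1:ℝ)) (f := atTop (α := ℕ))).add
      tendsto_one_div_atTop_nhds_zero_nat
    rw [add_zero] at h
    apply h.congr'
    filter_upwards [eventually_ge_atTop 1] with n hn
    have hn0 : ((n:ℝ)) ≠ 0 := by
      have : (0:ℝ) < n := by exact_mod_cast hn
      exact ne_of_gt this
    field_simp
  have h5 := h2.mul h4
  rw [zero_mul] at h5
  apply h5.congr'
  filter_upwards [eventually_ge_atTop 1] with n hn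
  have hn0 : ((n:ℝ)) ≠ 0 := by
    have : (0:ℝ) < n := by exact_mod_cast hn
    exact ne_of_gt this
  have hn1 : ((n:ℝ)+1) ≠ 0 := by positivity
  field_simp

lemma F_eventually (a : ℝ) (ha : 0 < a) : ∀ᶠ n : ℕ in atTop,
    Real.log (n+1)/n + Real.log 2 +
      (((mfun a n : ℝ)/n) * Real.log ((mfun a n : ℝ)/n) +
        (1 - (mfun a n : ℝ)/n) * Real.log (1 - (mfun a n : ℝ)/n)) ≤ (0.189:ℝ) * Real.log 2 := by
  have hg : ContinuousAt (fun y : ℝ => y * Real.log y + (1-y) * Real.log (1-y)) (1/4) := by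
    have h1 : ContinuousAt Real.log (1/4 : ℝ) := Real.continuousAt_log (by norm_num)
    have hsub : ContinuousAt (fun y : ℝ => 1 - y) (1/4 : ℝ) :=
      continuousAt_const.sub continuousAt_id
    have h2 : ContinuousAt Real.log ((fun y : ℝ => 1 - y) (1/4 : ℝ)) :=
      Real.continuousAt_log (by norm_num)
    exact (continuousAt_id.mul h1).add (hsub.mul (h2.comp hsub))
  have hcomp := (hg.tendsto).comp (mfun_tendsto a ha)
  have htot := (log_succ_div_tendsto.add
    (tendsto_const_nhds (x := Real.log 2) (f := atTop (α := ℕ)))).add hcomp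
  have hev := htot.eventually_lt_const numeric_lt
  filter_upwards [hev] with n hn
  exact le_of_lt hn

lemma main_ineq (a : ℝ) (ha : 0 < a) : ∀ᶠ n : ℕ in atTop,
    ((n:ℝ)+1) * ((mfun a n : ℝ)^(mfun a n) * ((n - mfun a n : ℕ) : ℝ)^(n - mfun a n)) * 2^n
      ≤ 2^((0.189:ℝ)*(n:ℝ)) * (n:ℝ)^n := by
  filter_upwards [F_eventually a ha, mfun_facts a ha, eventually_ge_atTop 8] with n hF hfacts hn8
  obtain ⟨hM1, hM4, -⟩ := hfacts
  set M := mfun a n with hMdef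
  set K := n - M with hKdef
  have hMle : M ≤ n := by omega
  have hK1 : 1 ≤ K := by omega
  have hn0 : (0:ℝ) < n := by
    have : (8:ℝ) ≤ n := by exact_mod_cast hn8
    linarith
  have hMr1 : (1:ℝ) ≤ (M:ℝ) := by exact_mod_cast hM1
  have hKr1 : (1:ℝ) ≤ (K:ℝ) := by exact_mod_cast hK1
  have hMr0 : (0:ℝ) < (M:ℝ) := by linarith
  have hKr0 : (0:ℝ) < (K:ℝ) := by linarith
  have hKr : (K:ℝ) = (n:ℝ) - (M:ℝ) := by
    rw [hKdef]; push_cast [Nat.cast_sub hMle]; ring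
  have hL : (0:ℝ) < ((n:ℝ)+1) * ((M:ℝ)^M * (K:ℝ)^K) * 2^n := by positivity
  have hR : (0:ℝ) < 2^((0.189:ℝ)*(n:ℝ)) * (n:ℝ)^n := by positivity
  rw [← Real.log_le_log_iff hL hR]
  rw [Real.log_mul (by positivity) (by positivity),
    Real.log_mul (by positivity) (by positivity),
    Real.log_mul (by positivity) (by positivity),
    Real.log_mul (by positivity) (by positivity),
    Real.log_pow, Real.log_pow, Real.log_pow, Real.log_pow,
    Real.log_rpow (by norm_num : (0:ℝ) < 2)]
  -- goal: log(n+1) + (M*log M + K*log K) + n*log 2 ≤ 0.189*n*log 2 + n*log n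
  have e1 : Real.log ((M:ℝ)/(n:ℝ)) = Real.log M - Real.log n :=
    Real.log_div (ne_of_gt hMr0) (ne_of_gt hn0)
  have e2 : 1 - (M:ℝ)/(n:ℝ) = (K:ℝ)/(n:ℝ):= by
    rw [hKr]; field_simp
  have e3 : Real.log ((K:ℝ)/(n:ℝ)) = Real.log K - Real.log n :=
    Real.log_div (ne_of_gt hKr0) (ne_of_gt hn0)
  rw [e1, e2, e3] at hF
  have hFn := mul_le_mul_of_nonneg_right hF (le_of_lt hn0)
  have expand : (Real.log (n+1)/n + Real.log 2 +
      (((M:ℝ)/n) * (Real.log M - Real.log n) +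
        ((K:ℝ)/n) * (Real.log K - Real.log n))) * n
      = Real.log (n+1) + (n:ℝ)*Real.log 2 +
        ((M:ℝ)*(Real.log M - Real.log n) + (K:ℝ)*(Real.log K - Real.log n)) := by
    field_simp
  rw [expand] at hFn
  have hsum : (M:ℝ) * Real.log n + (K:ℝ) * Real.log n = (n:ℝ) * Real.log n := by
    rw [hKr]; ring
  have goal2 : Real.log (↑n + 1) + ↑n * Real.log 2 + ((M:ℝ) * (Real.log M - Real.log n) + (K:ℝ) * (Real.log K - Real.log n)) + (n:ℝ) * Real.log n ≤ (0.189:ℝ) * Real.log 2 * n + (n:ℝ)* Real.log n := by linarith [hFn]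
  calc Real.log (↑n + 1) + ((M:ℝ) * Real.log M + (K:ℝ) * Real.log K) + ↑n * Real.log 2
      = Real.log (↑n + 1) + ↑n * Real.log 2 + ((M:ℝ) * (Real.log M - Real.log n) + (K:ℝ) * (Real.log K - Real.log n)) + ((M:ℝ) * Real.log n + (K:ℝ) * Real.log n) := by ring
    _ = Real.log (↑n + 1) + ↑n * Real.log 2 + ((M:ℝ) * (Real.log M - Real.log n) + (K:ℝ) * (Real.log K - Real.log n)) + (n:ℝ) * Real.log n := by rw [hsum]
    _ ≤ (0.189:ℝ) * Real.log 2 * n + (n:ℝ) * Real.log n := goal2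
    _ = (0.189:ℝ) * ↑n * Real.log 2 + ↑n * Real.log ↑n := by ring

/-- Hamming-bound consequence: for any `a > 0` and sufficiently large `n`, every binary
`(n, M, d)` code with `d ≥ n/2 - a√n` satisfies `M ≤ 2^(0.189 n)`. -/
theorem hamming_bound_sqrt_regime (a : ℝ) (ha : 0 < a) :
    ∃ N : ℕ, ∀ n : ℕ, N ≤ n →
      ∀ d : ℕ, ∀ C : Finset (Fin n → ZMod 2),
        (∀ x ∈ C, ∀ y ∈ C, x ≠ y → d ≤ hammingDist x y) →
        ((n : ℝ) / 2 - a * Real.sqrt n ≤ d) →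
        (C.card : ℝ) ≤ (2 : ℝ) ^ ((0.189 : ℝ) * n) := by
  obtain ⟨N, hN⟩ := Filter.eventually_atTop.mp
    ((mfun_facts a ha).and ((main_ineq a ha).and (eventually_ge_atTop 1)))
  refine ⟨N, fun n hn d C hd hdist => ?_⟩
  obtain ⟨⟨hM1, hM4, hM2⟩, hmain, hn1⟩ := hN n hn
  set M := mfun a n with hMdef
  set K := n - M with hKdef
  -- minimum distance exceeds 2M
  have h2m : 2 * M + 1 ≤ d := by
    have h : ((2 * M + 1 : ℕ) : ℝ) ≤ (d : ℝ) := by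
      push_cast
      calc (2 * (M:ℝ) + 1) ≤ (n : ℝ)/2 - a * Real.sqrt n := by
            have := hM2; push_cast at this ⊢; linarith
        _ ≤ d := hdist
    exact_mod_cast h
  have hpack := packing n d C M hd (by omega)
  have hB := pow_le_max_term n M (by omega)
  have hh : C.card * n ^ n ≤ (n+1) * (M^M * K^K) * 2^n := by
    calc C.card * n ^ n
        ≤ C.card * ((n+1) * (n.choose M * (M^M * (n - M)^(n - M)))) :=
          Nat.mul_le_mul_left _ hB
      _ = (n+1) * (M^M * K^K) * (C.card * n.choose M) := by rw [← hKdef]; ring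
      _ ≤ (n+1) * (M^M * K^K) * 2^n := Nat.mul_le_mul_left _ hpack
  have hhr : (C.card : ℝ) * (n:ℝ) ^ n ≤ ((n:ℝ)+1) * ((M:ℝ)^M * ((K:ℕ):ℝ)^K) * 2^n := by
    exact_mod_cast hh
  have hfin : (C.card : ℝ) * (n:ℝ) ^ n ≤ (2:ℝ)^((0.189:ℝ)*(n:ℝ)) * (n:ℝ)^n :=
    le_trans hhr hmain
  have hpow : (0:ℝ) < (n:ℝ)^n := by
    have : (0:ℝ) < n := by exact_mod_cast hn1
    positivity
  exact le_of_mul_le_mul_right hfin hpow
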